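/- Let D ⊆ ℤ^d be a finite set whose cardinality p is a prime, and let C ⊆ ℤ^d satisfy D ⊕ C = ℤ^d (every element of ℤ^d is uniquely expressible as a sum of an element of D and an element of C). Then for all u, v ∈ D, the set C is invariant under translation by p·(v − u); in particular, if D has at least two elements, C is periodic with some nonzero period. -/

import Mathlib

open AddMonoidAlgebra

section Aux

variable {d : ℕ} {p : ℕ}

/-- Translation by `g` as a linear endomorphism of `(Fin d → ℤ) → ZMod p`. -/
def trAux (p : ℕ) (g : Fin d → ℤ) :
    Module.End (ZMod p) ((Fin d → ℤ) → ZMod p) where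
  toFun f := fun w => f (w - g)
  map_add' _ _ := rfl
  map_smul' _ _ := rfl

/-- Translations as a monoid hom from `Multiplicative (Fin d → ℤ)`. -/
def TAux (p : ℕ) : Multiplicative (Fin d → ℤ) →* Module.End (ZMod p) ((Fin d → ℤ) → ZMod p) where
  toFun g := trAux p g.toAdd
  map_one' := by
    apply LinearMap.ext; intro f; funext w
    simp [trAux]
  map_mul' g h := by
    apply LinearMap.ext; intro f; funext w
    simp [trAux, Module.End.mul_apply, sub_sub]

end Aux

theorem key_lemma (d : ℕ) (D : Finset (Fin d → ℤ)) (C : Set (Fin d → ℤ))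
    (hp : D.card.Prime)
    (htile : ∀ w : Fin d → ℤ,
      ∃! q : (Fin d → ℤ) × (Fin d → ℤ), q.1 ∈ D ∧ q.2 ∈ C ∧ q.1 + q.2 = w) :
    ∀ u ∈ D, ∀ v ∈ D, ∀ x : Fin d → ℤ, x ∈ C ↔ x + (D.card : ℤ) • (v - u) ∈ C := by
  classical
  set p := D.card with hpdef
  haveI : Fact p.Prime := ⟨hp⟩
  set φ : AddMonoidAlgebra (ZMod p) (Fin d → ℤ) →ₐ[ZMod p]
      Module.End (ZMod p) ((Fin d → ℤ) → ZMod p) :=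
    AddMonoidAlgebra.lift (ZMod p) _ (Fin d → ℤ) (TAux p) with hφdef
  set χ : (Fin d → ℤ) → ZMod p := fun w => if w ∈ C then (1 : ZMod p) else 0 with hχdef
  set a : AddMonoidAlgebra (ZMod p) (Fin d → ℤ) :=
    ∑ u ∈ D, AddMonoidAlgebra.single u (1 : ZMod p) with hadef
  -- unique representation: the filter has card 1
  have hfilter : ∀ w : Fin d → ℤ, (D.filter (fun u => w - u ∈ C)).card = 1 := by
    intro w
    obtain ⟨q, ⟨hq1, hq2, hq3⟩, huniq⟩ := htile w
    rw [Finset.card_eq_one]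
    refine ⟨q.1, ?_⟩
    ext u
    simp only [Finset.mem_filter, Finset.mem_singleton]
    constructor
    · rintro ⟨hu, hc⟩
      have := huniq (u, w - u) ⟨hu, hc, by funext i; simp only [Pi.add_apply, Pi.sub_apply]; ring⟩
      exact congrArg Prod.fst this
    · rintro rfl
      refine ⟨hq1, ?_⟩
      have : w - q.1 = q.2 := by rw [← hq3]; abel
      rw [this]; exact hq2
  have hφa : ∀ f : (Fin d → ℤ) → ZMod p, (φ a) f = fun w => ∑ u ∈ D, f (w - u) := by
    intro f
    rw [hadef, map_sum]
    rw [LinearMap.coe_sum]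
    funext w
    simp only [Finset.sum_apply]
    refine Finset.sum_congr rfl fun u hu => ?_
    rw [AddMonoidAlgebra.lift_single, one_smul]
    rfl
  have h1 : (φ a) χ = fun _ => (1 : ZMod p) := by
    rw [hφa]
    funext w
    rw [hχdef]
    simp only []
    rw [Finset.sum_boole, hfilter w]
    norm_num
  have h2 : (φ a) (fun _ => (1 : ZMod p)) = 0 := by
    rw [hφa]
    funext w
    simp [hpdef]
  -- characteristic p
  haveI : CharP (AddMonoidAlgebra (ZMod p) (Fin d → ℤ)) p :=
    charP_of_injective_algebraMap' (ZMod p) p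
  have hap : a ^ p = ∑ u ∈ D, AddMonoidAlgebra.single (p • u) (1 : ZMod p) := by
    rw [hadef, sum_pow_char]
    refine Finset.sum_congr rfl fun u hu => ?_
    rw [AddMonoidAlgebra.single_pow, one_pow]
  have hzero : (φ (a ^ p)) χ = 0 := by
    obtain ⟨k, hk⟩ : ∃ k, p = k + 2 := ⟨p - 2, by have := hp.two_le; omega⟩
    have hdecomp : a ^ p = a ^ k * a * a :=
      (congrArg (a ^ ·) hk).trans (by rw [pow_succ, pow_succ])
    rw [hdecomp, map_mul, map_mul, Module.End.mul_apply, h1, Module.End.mul_apply, h2, map_zero]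
  have hkey : ∀ w : Fin d → ℤ, (∑ u ∈ D, χ (w - p • u)) = 0 := by
    intro w
    have := congrFun hzero w
    rw [hap, map_sum, LinearMap.coe_sum] at this
    simp only [Finset.sum_apply, Pi.zero_apply] at this
    rw [← this]
    refine Finset.sum_congr rfl fun u hu => ?_
    rw [AddMonoidAlgebra.lift_single, one_smul]
    rfl
  -- all-or-nothing
  have hall : ∀ w : Fin d → ℤ, ∀ u ∈ D, w - p • u ∈ C → ∀ v ∈ D, w - p • v ∈ C := by
    intro w u hu huc v hv
    have hsum := hkey w
    rw [hχdef] at hsum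
    simp only [] at hsum
    rw [Finset.sum_boole] at hsum
    have hdvd : p ∣ (D.filter (fun u => w - p • u ∈ C)).card :=
      (ZMod.natCast_eq_zero_iff _ p).mp hsum
    have hle : (D.filter (fun u => w - p • u ∈ C)).card ≤ p := by
      rw [hpdef]; exact Finset.card_filter_le _ _
    have hpos : 0 < (D.filter (fun u => w - p • u ∈ C)).card :=
      Finset.card_pos.mpr ⟨u, Finset.mem_filter.mpr ⟨hu, huc⟩⟩
    have hcard : (D.filter (fun u => w - p • u ∈ C)).card = p :=
      le_antisymm hle (Nat.le_of_dvd hpos hdvd)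
    have : D.filter (fun u => w - p • u ∈ C) = D :=
      Finset.eq_of_subset_of_card_le (Finset.filter_subset _ _) (by rw [hcard, hpdef])
    have hv' := hv
    rw [← this] at hv'
    exact (Finset.mem_filter.mp hv').2
  intro u hu v hv x
  have hx : x + (p : ℤ) • (v - u) = (x + p • v) - p • u := by
    rw [smul_sub, natCast_zsmul, natCast_zsmul]; abel
  have hx' : x = (x + p • v) - p • v := by abel
  constructor
  · intro hxc
    rw [hx]
    exact hall (x + p • v) v hv (by rw [← hx']; exact hxc) u hu
  · intro hxc
    rw [hx] at hxc
    rw [hx']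
    exact hall (x + p • v) u hu hxc v hv

/-- If `|D|` is prime and `D ⊕ C = ℤ^d`, then `C` is invariant under translation
by `|D|·(v-u)` for all `u, v ∈ D`; in particular if `|D| ≥ 2` then `C` is periodic. -/
theorem stmt_3 (d : ℕ) (D : Finset (Fin d → ℤ)) (C : Set (Fin d → ℤ))
    (hp : D.card.Prime)
    (htile : ∀ w : Fin d → ℤ,
      ∃! q : (Fin d → ℤ) × (Fin d → ℤ), q.1 ∈ D ∧ q.2 ∈ C ∧ q.1 + q.2 = w) :
    (∀ u ∈ D, ∀ v ∈ D, ∀ x : Fin d → ℤ, x ∈ C ↔ x + (D.card : ℤ) • (v - u) ∈ C) ∧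
    (2 ≤ D.card → ∃ t : Fin d → ℤ, t ≠ 0 ∧ ∀ x : Fin d → ℤ, x ∈ C ↔ x + t ∈ C) := by
  have hkey := key_lemma d D C hp htile
  refine ⟨hkey, fun h2 => ?_⟩
  obtain ⟨u, hu, v, hv, huv⟩ := Finset.one_lt_card.mp (by omega : 1 < D.card)
  refine ⟨(D.card : ℤ) • (v - u), ?_, fun x => hkey u hu v hv x⟩
  refine smul_ne_zero ?_ (sub_ne_zero.mpr (Ne.symm huv))
  exact_mod_cast hp.ne_zero
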